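/- Let d ≥ 1, n ≥ 1, let H : ℝ → M_d(ℂ) be (n−1)-times continuously differentiable with H(t) Hermitian for every t, and let U be the propagator generated by H. Fix t₀ ∈ ℝ and t ∈ ℝ, and suppose λ > 0 satisfies ‖H^{(j)}(t)‖ ≤ λ^{j+1} for all 0 ≤ j ≤ n−1. Then ‖∂_t^n U(t, t₀)‖ ≤ λ^n·b_n, where b_n is the n-th Bell number. -/

import Mathlib

open scoped Matrix.Norms.L2Operator
open Matrix

/-- The propagator generated by the Hamiltonian `H`: `i ∂ₜ U(t,t₀) = H(t) U(t,t₀)`,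
`U(t₀,t₀) = 1`. -/
def IsPropagator {d : ℕ} (H : ℝ → Matrix (Fin d) (Fin d) ℂ)
    (U : ℝ → ℝ → Matrix (Fin d) (Fin d) ℂ) : Prop :=
  (∀ t₀ : ℝ, U t₀ t₀ = 1) ∧
    ∀ t₀ t : ℝ, HasDerivAt (fun s => U s t₀) ((-Complex.I) • (H t * U t t₀)) t

/-- The complete exponential Bell polynomial `Y_n(x₁,…,xₙ)` (with `x i` the `i`-th argument,
`1 ≤ i ≤ n`): the sum over all tuples `(c₁,…,cₙ)` of nonnegative integers with
`c₁ + 2c₂ + ⋯ + n·cₙ = n` of `n!/(c₁!⋯cₙ!)·∏ⱼ (xⱼ/j!)^{cⱼ}`. -/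
noncomputable def bellY (n : ℕ) (x : ℕ → ℝ) : ℝ :=
  ∑ c ∈ Finset.univ.filter
      (fun c : Fin n → Fin (n + 1) => ∑ j : Fin n, ((j : ℕ) + 1) * (c j : ℕ) = n),
    ((n.factorial : ℝ) / ∏ j : Fin n, ((c j : ℕ).factorial : ℝ)) *
      ∏ j : Fin n, (x ((j : ℕ) + 1) / (((j : ℕ) + 1).factorial : ℝ)) ^ ((c j : ℕ))

def bellN : ℕ → ℕ
  | 0 => 1
  | n + 1 => ∑ k ∈ (Finset.range (n + 1)).attach, n.choose k * bellN k
decreasing_by exact Finset.mem_range.mp k.2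

lemma bellN_succ (n : ℕ) :
    bellN (n + 1) = ∑ k ∈ Finset.range (n + 1), n.choose k * bellN k := by
  rw [bellN, ← Finset.sum_attach (Finset.range (n+1)) (fun k => n.choose k * bellN k)]

lemma bellN_succ_rev (m : ℕ) :
    ∑ k ∈ Finset.range (m + 1), (m.choose k) * bellN (m - k) = bellN (m + 1) := by
  rw [bellN_succ]
  rw [← Finset.sum_range_reflect (fun k => m.choose k * bellN k) (m+1)]
  apply Finset.sum_congr rfl
  intro k hk
  rw [Finset.mem_range] at hk
  have hkm : k ≤ m := by omega
  have h1 : m + 1 - 1 - k = m - k := by omega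
  rw [h1, ← Nat.choose_symm hkm]

noncomputable def wfun (m N : ℕ) (c : Fin N → ℕ) : ℝ :=
  (m.factorial : ℝ) /
    ∏ j : Fin N, (((c j).factorial : ℝ) * (((j : ℕ) + 1).factorial : ℝ) ^ (c j))

noncomputable def Pset (N m : ℕ) : Finset (Fin N → ℕ) :=
  (Fintype.piFinset fun _ : Fin N => Finset.range (N + 1)).filter
    (fun c => ∑ j : Fin N, ((j : ℕ) + 1) * c j = m)

lemma mem_Pset {N m : ℕ} {c : Fin N → ℕ} :
    c ∈ Pset N m ↔ (∀ j, c j < N + 1) ∧ ∑ j : Fin N, ((j : ℕ) + 1) * c j = m := by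
  simp [Pset, Fintype.mem_piFinset, Nat.lt_succ_iff]

lemma wpos {m N : ℕ} (c : Fin N → ℕ) : 0 < ∏ j : Fin N,
    (((c j).factorial : ℝ) * (((j : ℕ) + 1).factorial : ℝ) ^ (c j)) := by
  apply Finset.prod_pos
  intro j _
  positivity

lemma Pset_zero (N : ℕ) : Pset N 0 = {fun _ => 0} := by
  ext c
  simp only [mem_Pset, Finset.mem_singleton]
  constructor
  · rintro ⟨-, h⟩
    funext j
    have := Finset.sum_eq_zero_iff.mp h j (Finset.mem_univ j)
    simpa using this
  · rintro rfl
    exact ⟨fun j => by simp, by simp⟩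

lemma erase_sum_update (N : ℕ) (j : Fin N) (c : Fin N → ℕ) (v : ℕ) :
    ∑ i ∈ Finset.univ.erase j, ((i:ℕ)+1) * (Function.update c j v) i
      = ∑ i ∈ Finset.univ.erase j, ((i:ℕ)+1) * c i :=
  Finset.sum_congr rfl fun i hi => by
    rw [Function.update_of_ne (Finset.ne_of_mem_erase hi)]

lemma sum_split (N : ℕ) (j : Fin N) (c : Fin N → ℕ) :
    ∑ i : Fin N, ((i:ℕ)+1) * c i
      = ((j:ℕ)+1) * c j + ∑ i ∈ Finset.univ.erase j, ((i:ℕ)+1) * c i :=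
  (Finset.add_sum_erase _ (fun i : Fin N => ((i:ℕ)+1) * c i) (Finset.mem_univ j)).symm

lemma claim_aux (m N : ℕ) (hmN : m + 1 ≤ N) (j : Fin N) (hjm : (j:ℕ) ≤ m) :
    (∑ c ∈ Pset N (m+1), ((((j:ℕ)+1) * c j : ℕ) : ℝ) * wfun (m+1) N c)
      = ∑ c' ∈ Pset N (m - (j:ℕ)), (((m:ℝ)+1) * (m.choose (j:ℕ))) * wfun (m-(j:ℕ)) N c' := by
  classical
  have hfil : ∑ c ∈ (Pset N (m+1)).filter (fun c => c j ≠ 0),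
      ((((j:ℕ)+1) * c j : ℕ) : ℝ) * wfun (m+1) N c
      = ∑ c ∈ Pset N (m+1), ((((j:ℕ)+1) * c j : ℕ) : ℝ) * wfun (m+1) N c := by
    apply Finset.sum_filter_of_ne
    intro c _ hne h0
    exact hne (by rw [h0, Nat.mul_zero, Nat.cast_zero, zero_mul])
  rw [← hfil]
  refine Finset.sum_nbij' (i := fun c => Function.update c j (c j - 1))
    (j := fun c => Function.update c j (c j + 1)) ?_ ?_ ?_ ?_ ?_
  · -- forward membership
    intro c hc
    rw [Finset.mem_filter] at hc
    obtain ⟨hc, hne⟩ := hc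
    rw [mem_Pset] at hc ⊢
    obtain ⟨hb, hs⟩ := hc
    beta_reduce
    constructor
    · intro i
      rcases eq_or_ne i j with rfl | hij
      · rw [Function.update_self]; exact lt_of_le_of_lt (by omega) (hb i)
      · rw [Function.update_of_ne hij]; exact hb i
    · obtain ⟨k, hk⟩ : ∃ k, c j = k + 1 := ⟨c j - 1, by omega⟩
      rw [sum_split N j, erase_sum_update, Function.update_self, hk, Nat.add_sub_cancel]
      have hs1 : ((j:ℕ)+1) * c j + ∑ i ∈ Finset.univ.erase j, ((i:ℕ)+1) * c i = m + 1 := by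
        rw [← sum_split N j c]; exact hs
      rw [hk] at hs1
      have hexp : ((j:ℕ)+1) * (k+1) = ((j:ℕ)+1) * k + ((j:ℕ)+1) := by ring
      rw [hexp] at hs1
      omega
  · -- backward membership
    intro c hc
    rw [mem_Pset] at hc
    obtain ⟨hb, hs⟩ := hc
    have hs1 : ((j:ℕ)+1) * c j + ∑ i ∈ Finset.univ.erase j, ((i:ℕ)+1) * c i = m - (j:ℕ) := by
      rw [← sum_split N j c]; exact hs
    have hcj : c j ≤ m - (j:ℕ) := by
      have h1 : c j ≤ ((j:ℕ)+1) * c j := Nat.le_mul_of_pos_left _ (by omega)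
      omega
    rw [Finset.mem_filter, mem_Pset]
    beta_reduce
    refine ⟨⟨?_, ?_⟩, ?_⟩
    · intro i
      rcases eq_or_ne i j with rfl | hij
      · rw [Function.update_self]; omega
      · rw [Function.update_of_ne hij]; exact hb i
    · rw [sum_split N j, erase_sum_update, Function.update_self]
      have hexp : ((j:ℕ)+1) * (c j + 1) = ((j:ℕ)+1) * c j + ((j:ℕ)+1) := by ring
      rw [hexp]
      omega
    · rw [Function.update_self]; omega
  · -- left inverse
    intro c hc
    rw [Finset.mem_filter] at hc
    have hne : c j ≠ 0 := hc.2
    beta_reduce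
    funext i
    rw [Function.update_self, Function.update_idem]
    rcases eq_or_ne i j with rfl | hij
    · rw [Function.update_self]; omega
    · rw [Function.update_of_ne hij]
  · -- right inverse
    intro c _
    beta_reduce
    funext i
    rw [Function.update_self, Function.update_idem]
    rcases eq_or_ne i j with rfl | hij
    · rw [Function.update_self]; omega
    · rw [Function.update_of_ne hij]
  · -- value equality
    intro c hc
    rw [Finset.mem_filter, mem_Pset] at hc
    obtain ⟨⟨hb, hs⟩, hne⟩ := hc
    obtain ⟨k, hk⟩ : ∃ k, c j = k + 1 := ⟨c j - 1, by omega⟩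
    beta_reduce
    rw [wfun, wfun]
    set Q := ∏ i ∈ Finset.univ.erase j,
      (((c i).factorial : ℝ) * (((i:ℕ)+1).factorial : ℝ) ^ (c i)) with hQ
    have h1 : (∏ i : Fin N, (((c i).factorial : ℝ) * (((i:ℕ)+1).factorial : ℝ) ^ (c i)))
        = (((c j).factorial : ℝ) * (((j:ℕ)+1).factorial : ℝ) ^ (c j)) * Q :=
      (Finset.mul_prod_erase _ _ (Finset.mem_univ j)).symm
    have h2 : (∏ i : Fin N, ((((Function.update c j (c j - 1)) i).factorial : ℝ) *
          (((i:ℕ)+1).factorial : ℝ) ^ ((Function.update c j (c j - 1)) i)))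
        = ((((c j - 1).factorial : ℝ) * (((j:ℕ)+1).factorial : ℝ) ^ (c j - 1))) * Q := by
      rw [← Finset.mul_prod_erase _ _ (Finset.mem_univ j), Function.update_self]
      congr 1
      exact Finset.prod_congr rfl fun i hi => by
        rw [Function.update_of_ne (Finset.ne_of_mem_erase hi)]
    rw [h1, h2, hk, Nat.add_sub_cancel]
    have hQpos : (0:ℝ) < Q := Finset.prod_pos fun i _ => by positivity
    have hcm : ((m.choose (j:ℕ)) * (j:ℕ).factorial * (m - (j:ℕ)).factorial : ℝ)
        = (m.factorial : ℝ) := by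
      exact_mod_cast congrArg (Nat.cast : ℕ → ℝ)
        (Nat.choose_mul_factorial_mul_factorial hjm)
    have hQne : Q ≠ 0 := ne_of_gt hQpos
    have hk1 : ((k+1).factorial : ℝ) ≠ 0 := by positivity
    have hk2 : ((k).factorial : ℝ) ≠ 0 := by positivity
    have hj1 : ((((j:ℕ)+1).factorial : ℝ)) ≠ 0 := by positivity
    field_simp
    push_cast [Nat.factorial_succ, pow_succ]
    linear_combination (-(((j:ℕ):ℝ)+1) * ((k:ℝ)+1) * ((m:ℝ)+1) * ((k.factorial:ℕ):ℝ) *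
      ((((j:ℕ):ℝ)+1) * (((j:ℕ).factorial:ℕ):ℝ))^k) * hcm

lemma key : ∀ (m N : ℕ), m ≤ N → (∑ c ∈ Pset N m, wfun m N c) = (bellN m : ℝ) := by
  intro m
  induction m using Nat.strong_induction_on with
  | _ m IH =>
    match m, IH with
    | 0, _ =>
      intro N _
      rw [Pset_zero, Finset.sum_singleton, wfun]
      simp [bellN]
    | (m+1), IH =>
      intro N hmN
      have hstep1 : ∀ c ∈ Pset N (m+1), wfun (m+1) N c
          = (1/((m:ℝ)+1)) * ∑ j : Fin N, ((((j:ℕ)+1) * c j : ℕ) : ℝ) * wfun (m+1) N c := by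
        intro c hc
        have hcs : ∑ j : Fin N, ((j:ℕ)+1) * c j = m+1 := (mem_Pset.mp hc).2
        rw [← Finset.sum_mul, ← Nat.cast_sum, hcs]
        have hne : (m:ℝ)+1 ≠ 0 := by positivity
        push_cast
        rw [← mul_assoc, one_div, inv_mul_cancel₀ hne, one_mul]
      rw [Finset.sum_congr rfl hstep1, ← Finset.mul_sum, Finset.sum_comm]
      set G : ℕ → ℝ := fun k => if k ≤ m then ((m:ℝ)+1) * (m.choose k) * (bellN (m-k) : ℝ) else 0
        with hG
      have claim : ∀ j : Fin N,
          (∑ c ∈ Pset N (m+1), ((((j:ℕ)+1) * c j : ℕ) : ℝ) * wfun (m+1) N c) = G (j:ℕ) := by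
        intro j
        rw [hG]
        beta_reduce
        by_cases hjm : (j:ℕ) ≤ m
        · rw [if_pos hjm, claim_aux m N hmN j hjm, ← Finset.mul_sum,
            IH (m - (j:ℕ)) (by omega) N (by omega)]
        · rw [if_neg hjm]
          apply Finset.sum_eq_zero
          intro c hc
          have hcs := (mem_Pset.mp hc).2
          have hle : ((j:ℕ)+1) * c j ≤ m+1 := by
            rw [← hcs]
            exact Finset.single_le_sum (f := fun i : Fin N => ((i:ℕ)+1) * c i)
              (fun i _ => Nat.zero_le _) (Finset.mem_univ j)
          have hcj : c j = 0 := by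
            by_contra h
            have : (j:ℕ)+1 ≤ ((j:ℕ)+1)*c j := Nat.le_mul_of_pos_right _ (by omega)
            omega
          rw [hcj, Nat.mul_zero, Nat.cast_zero, zero_mul]
      calc (1/((m:ℝ)+1)) * ∑ j : Fin N, ∑ c ∈ Pset N (m+1),
              ((((j:ℕ)+1) * c j : ℕ) : ℝ) * wfun (m+1) N c
          = (1/((m:ℝ)+1)) * ∑ j : Fin N, G (j:ℕ) := by
            rw [Finset.sum_congr rfl (fun j _ => claim j)]
        _ = (1/((m:ℝ)+1)) * ∑ k ∈ Finset.range N, G k := by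
            rw [Fin.sum_univ_eq_sum_range]
        _ = (1/((m:ℝ)+1)) * ∑ k ∈ Finset.range (m+1), G k := by
            rw [Finset.sum_subset (Finset.range_subset_range.mpr hmN)]
            intro x _ hx
            rw [Finset.mem_range] at hx
            rw [hG]
            simp only [if_neg (by omega : ¬ x ≤ m)]
        _ = (1/((m:ℝ)+1)) * ∑ k ∈ Finset.range (m+1),
              ((m:ℝ)+1) * (m.choose k) * (bellN (m-k) : ℝ) := by
            congr 1
            refine Finset.sum_congr rfl fun k hk => ?_
            rw [Finset.mem_range] at hk
            rw [hG]
            simp only [if_pos (by omega : k ≤ m)]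
        _ = ∑ k ∈ Finset.range (m+1), ((m.choose k : ℝ) * (bellN (m-k) : ℝ)) := by
            have hne : (m:ℝ)+1 ≠ 0 := by positivity
            simp_rw [mul_assoc]
            rw [← Finset.mul_sum, ← mul_assoc, one_div, inv_mul_cancel₀ hne, one_mul]
        _ = (bellN (m+1) : ℝ) := by
            rw [← bellN_succ_rev m]
            push_cast
            rfl

lemma bellY_one (n : ℕ) : bellY n (fun _ => 1) = (bellN n : ℝ) := by
  rw [← key n n le_rfl, bellY]
  refine Finset.sum_bij' (i := fun (c : Fin n → Fin (n+1)) _ => fun j => (c j : ℕ))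
    (j := fun (c : Fin n → ℕ) hc => fun j => (⟨c j, (mem_Pset.mp hc).1 j⟩ : Fin (n+1)))
    ?_ ?_ ?_ ?_ ?_
  · intro c hc
    rw [Finset.mem_filter] at hc
    rw [mem_Pset]
    exact ⟨fun j => (c j).2, hc.2⟩
  · intro c hc
    rw [Finset.mem_filter]
    exact ⟨Finset.mem_univ _, (mem_Pset.mp hc).2⟩
  · intro c hc
    funext i
    exact Fin.ext rfl
  · intro c hc
    funext i
    rfl
  · intro c hc
    rw [wfun]
    simp only [div_pow, one_pow]
    rw [Finset.prod_div_distrib, Finset.prod_const_one, div_mul_div_comm, mul_one,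
      Finset.prod_mul_distrib]

variable {d : ℕ}

noncomputable instance : ContinuousStar (Matrix (Fin d) (Fin d) ℂ) := by
  constructor
  have : Isometry (star : Matrix (Fin d) (Fin d) ℂ → Matrix (Fin d) (Fin d) ℂ) := by
    intro A B
    simp only [edist_dist, dist_eq_norm, Matrix.star_eq_conjTranspose, ← Matrix.conjTranspose_sub]
    rw [Matrix.l2_opNorm_conjTranspose]
  exact this.continuous

example : StarModule ℝ (Matrix (Fin d) (Fin d) ℂ) := inferInstance

lemma prop_unitary {H : ℝ → Matrix (Fin d) (Fin d) ℂ} {U : ℝ → ℝ → Matrix (Fin d) (Fin d) ℂ}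
    (hHerm : ∀ t, (H t).IsHermitian) (hU : IsPropagator H U) (t₀ s : ℝ) :
    (U s t₀)ᴴ * (U s t₀) = 1 := by
  have key : ∀ s : ℝ, HasDerivAt (fun r => star (U r t₀) * U r t₀) 0 s := by
    intro s
    have h1 := hU.2 t₀ s
    have h2 : HasDerivAt (fun r => star (U r t₀)) (star ((-Complex.I) • (H s * U s t₀))) s :=
      h1.star
    have h3 := h2.mul h1
    refine h3.congr_deriv (Eq.symm ?_)
    rw [star_smul, StarMul.star_mul, Matrix.star_eq_conjTranspose, Matrix.star_eq_conjTranspose,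
      (hHerm s).eq]
    simp only [star_neg, Complex.star_def, Complex.conj_I, neg_neg]
    rw [Matrix.smul_mul, Matrix.mul_smul, neg_smul, Matrix.mul_assoc]
    simp
  have hconst : ∀ s : ℝ, star (U s t₀) * U s t₀ = star (U t₀ t₀) * U t₀ t₀ := by
    intro s
    apply is_const_of_deriv_eq_zero (f := fun r => star (U r t₀) * U r t₀)
    · intro x
      exact (key x).differentiableAt
    · intro x
      exact (key x).deriv
  have := hconst s
  rw [hU.1 t₀] at this
  simpa [Matrix.star_eq_conjTranspose] using this

lemma prop_norm_one (hd : 1 ≤ d) {H : ℝ → Matrix (Fin d) (Fin d) ℂ}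
    {U : ℝ → ℝ → Matrix (Fin d) (Fin d) ℂ}
    (hHerm : ∀ t, (H t).IsHermitian) (hU : IsPropagator H U) (t₀ s : ℝ) :
    ‖U s t₀‖ = 1 := by
  have hone : ‖(1 : Matrix (Fin d) (Fin d) ℂ)‖ = 1 := by
    have h1 := Matrix.l2_opNorm_conjTranspose_mul_self (1 : Matrix (Fin d) (Fin d) ℂ)
    rw [Matrix.conjTranspose_one, one_mul] at h1
    have hne : (1 : Matrix (Fin d) (Fin d) ℂ) ≠ 0 := by
      intro h
      have := congrFun (congrFun h ⟨0, hd⟩) ⟨0, hd⟩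
      simp [Matrix.one_apply_eq] at this
    have hpos : 0 < ‖(1 : Matrix (Fin d) (Fin d) ℂ)‖ := norm_pos_iff.mpr hne
    nlinarith
  have h2 := Matrix.l2_opNorm_conjTranspose_mul_self (U s t₀)
  rw [prop_unitary hHerm hU t₀ s, hone] at h2
  nlinarith [norm_nonneg (U s t₀)]

section analytic
variable {d : ℕ} {H : ℝ → Matrix (Fin d) (Fin d) ℂ} {U : ℝ → ℝ → Matrix (Fin d) (Fin d) ℂ}
  {n : ℕ}

lemma prop_contDiff (hH : ContDiff ℝ (n - 1 : ℕ) H) (hU : IsPropagator H U) (t₀ : ℝ)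
    (hn : 1 ≤ n) :
    ∀ k : ℕ, k ≤ n → ContDiff ℝ (k : ℕ) (fun s => U s t₀) := by
  intro k
  induction k with
  | zero =>
    intro _
    have hdiff : Differentiable ℝ fun s => U s t₀ := fun s => (hU.2 t₀ s).differentiableAt
    have hcont : Continuous (fun s => U s t₀) := hdiff.continuous
    have h0 : ContDiff ℝ 0 (fun s : ℝ => U s t₀) := contDiff_zero.mpr hcont
    simpa using h0
  | succ k IHk =>
    intro hk
    have hcast : ((k+1 : ℕ) : WithTop ℕ∞) = (k : ℕ) + 1 := by push_cast; rfl
    rw [hcast, contDiff_succ_iff_deriv]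
    refine ⟨fun s => (hU.2 t₀ s).differentiableAt, by simp, ?_⟩
    have hderiv : deriv (fun s => U s t₀) = fun s => (-Complex.I) • (H s * U s t₀) :=
      funext fun s => (hU.2 t₀ s).deriv
    rw [hderiv]
    exact ((hH.of_le (by exact_mod_cast (by omega : k ≤ n - 1))).mul
      (IHk (by omega))).const_smul _

lemma main_bound (hd : 1 ≤ d) (hn : 1 ≤ n) (hH : ContDiff ℝ (n - 1 : ℕ) H)
    (hHerm : ∀ t, (H t).IsHermitian) (hU : IsPropagator H U) (t₀ t : ℝ) {lam : ℝ}
    (hlam : 0 < lam) (hbound : ∀ j ≤ n - 1, ‖iteratedDeriv j H t‖ ≤ lam ^ (j + 1)) :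
    ∀ m, m ≤ n → ‖iteratedDeriv m (fun s => U s t₀) t‖ ≤ lam ^ m * bellN m := by
  intro m
  induction m using Nat.strong_induction_on with
  | _ m IH =>
    match m, IH with
    | 0, _ =>
      intro _
      rw [iteratedDeriv_zero]
      rw [prop_norm_one hd hHerm hU t₀ t]
      simp [bellN]
    | (m+1), IH =>
      intro hm
      have hderiv : deriv (fun s => U s t₀) = fun s => (-Complex.I) • (H s * U s t₀) :=
        funext fun s => (hU.2 t₀ s).deriv
      rw [iteratedDeriv_succ', hderiv, ← norm_iteratedFDeriv_eq_norm_iteratedDeriv]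
      have hHk : ContDiff ℝ (m : ℕ) H :=
        hH.of_le (by exact_mod_cast (by omega : m ≤ n - 1))
      have hUk : ContDiff ℝ (m : ℕ) (fun s => U s t₀) :=
        prop_contDiff hH hU t₀ hn m (by omega)
      have hmul : ContDiff ℝ (m : ℕ) (fun s => H s * U s t₀) := hHk.mul hUk
      have hrw : (fun s => (-Complex.I) • (H s * U s t₀))
          = (-Complex.I) • (fun s => H s * U s t₀) := rfl
      rw [hrw, iteratedFDeriv_const_smul_apply hmul.contDiffAt,
        norm_smul (-Complex.I) (iteratedFDeriv ℝ m (fun s => H s * U s t₀) t)]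
      have hnormI : ‖-Complex.I‖ = 1 := by simp
      rw [hnormI, one_mul]
      calc ‖iteratedFDeriv ℝ m (fun s => H s * U s t₀) t‖
          ≤ ∑ i ∈ Finset.range (m + 1), (m.choose i : ℝ) * ‖iteratedFDeriv ℝ i H t‖ *
            ‖iteratedFDeriv ℝ (m - i) (fun s => U s t₀) t‖ :=
            norm_iteratedFDeriv_mul_le hHk hUk t le_rfl
        _ ≤ ∑ i ∈ Finset.range (m + 1), (m.choose i : ℝ) * lam ^ (i+1) *
            (lam ^ (m-i) * bellN (m-i)) := by
            refine Finset.sum_le_sum fun i hi => ?_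
            rw [Finset.mem_range] at hi
            have h1 : ‖iteratedFDeriv ℝ i H t‖ ≤ lam ^ (i+1) := by
              rw [norm_iteratedFDeriv_eq_norm_iteratedDeriv]
              exact hbound i (by omega)
            have h2 : ‖iteratedFDeriv ℝ (m-i) (fun s => U s t₀) t‖ ≤ lam ^ (m-i) * bellN (m-i) := by
              rw [norm_iteratedFDeriv_eq_norm_iteratedDeriv]
              exact IH (m-i) (by omega) (by omega)
            have hc : (0:ℝ) ≤ (m.choose i : ℝ) := by positivity
            have := mul_le_mul (mul_le_mul_of_nonneg_left h1 hc) h2 (norm_nonneg _)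
              (by positivity)
            exact this
        _ = lam ^ (m+1) * bellN (m+1) := by
            rw [← bellN_succ_rev m]
            push_cast
            rw [Finset.mul_sum]
            refine Finset.sum_congr rfl fun i hi => ?_
            rw [Finset.mem_range] at hi
            have : lam ^ (i+1) * lam ^ (m-i) = lam ^ (m+1) := by
              rw [← pow_add]
              congr 1
              omega
            linear_combination ((m.choose i : ℝ) * ((bellN (m-i) : ℕ) : ℝ)) * this
end analytic


theorem stmt14 {d : ℕ} (hd : 1 ≤ d) (n : ℕ) (hn : 1 ≤ n)
    (H : ℝ → Matrix (Fin d) (Fin d) ℂ) (hH : ContDiff ℝ (n - 1 : ℕ) H)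
    (hHerm : ∀ t, (H t).IsHermitian)
    (U : ℝ → ℝ → Matrix (Fin d) (Fin d) ℂ) (hU : IsPropagator H U)
    (t₀ t : ℝ) (lam : ℝ) (hlam : 0 < lam)
    (hbound : ∀ j ≤ n - 1, ‖iteratedDeriv j H t‖ ≤ lam ^ (j + 1)) :
    ‖iteratedDeriv n (fun s => U s t₀) t‖ ≤ lam ^ n * bellY n (fun _ => 1) := by
  have h1 := main_bound hd hn hH hHerm hU t₀ t hlam hbound n le_rfl
  rwa [bellY_one]
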